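/- Let u₁ : P₃ → P₁ and u₂ : P₃ → P₂ be homomorphisms of fine saturated (fs) commutative monoids. Then the pushout of u₁ and u₂ exists in the category of fs monoids, and it is computed as the saturation of the integralization of the amalgamated sum P₁ ⊕_{P₃} P₂ taken in commutative monoids. -/

import Mathlib

/-- Saturated, expressed intrinsically for a cancellative commutative monoid. -/
def IsSaturatedAddMonoid (P : Type*) [AddCommMonoid P] : Prop :=
  ∀ a b : P, (∃ n : ℕ, 1 ≤ n ∧ ∃ c : P, n • a = n • b + c) → ∃ d : P, a = b + d

section Amalg

variable {P₁ P₂ P₃ : Type} [AddCommMonoid P₁] [AddCommMonoid P₂] [AddCommMonoid P₃]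

/-- The congruence on `P₁ ⊕ P₂` generated by `(u₁ p, 0) ~ (0, u₂ p)` for `p : P₃`. -/
def amalgCon (u₁ : P₃ →+ P₁) (u₂ : P₃ →+ P₂) : AddCon (P₁ × P₂) :=
  addConGen fun x y => ∃ p : P₃, x = (u₁ p, 0) ∧ y = (0, u₂ p)

/-- The amalgamated sum `P₁ ⊕_{P₃} P₂` in commutative monoids. -/
def Amalg (u₁ : P₃ →+ P₁) (u₂ : P₃ →+ P₂) : Type := (amalgCon u₁ u₂).Quotient

instance (u₁ : P₃ →+ P₁) (u₂ : P₃ →+ P₂) : AddCommMonoid (Amalg u₁ u₂) :=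
  inferInstanceAs (AddCommMonoid (amalgCon u₁ u₂).Quotient)

/-- The canonical map `P₁ → P₁ ⊕_{P₃} P₂`. -/
def amalgInl (u₁ : P₃ →+ P₁) (u₂ : P₃ →+ P₂) : P₁ →+ Amalg u₁ u₂ :=
  (amalgCon u₁ u₂).mk'.comp (AddMonoidHom.inl P₁ P₂)

/-- The canonical map `P₂ → P₁ ⊕_{P₃} P₂`. -/
def amalgInr (u₁ : P₃ →+ P₁) (u₂ : P₃ →+ P₂) : P₂ →+ Amalg u₁ u₂ :=
  (amalgCon u₁ u₂).mk'.comp (AddMonoidHom.inr P₁ P₂)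

/-- Data exhibiting a pushout of `u₁, u₂` in the category of fine saturated (fs) monoids,
computed as the saturation of the integralization of the amalgamated sum `P₁ ⊕_{P₃} P₂`:
`R` is fs, receives a map `θ` from the amalgamated sum which is universal among maps to
cancellative saturated monoids (this says exactly that `R` is the saturation of the
integralization of the amalgamated sum), and the resulting square satisfies the universal
property of the pushout among fs monoids. -/
structure FSPushoutData (u₁ : P₃ →+ P₁) (u₂ : P₃ →+ P₂) where
  /-- the underlying set of the fs pushout -/
  R : Type
  [instAddCommMonoid : AddCommMonoid R]
  [instCancel : IsCancelAdd R]
  /-- `R` is finitely generated -/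
  fg : AddMonoid.FG R
  /-- `R` is saturated -/
  saturated : IsSaturatedAddMonoid R
  /-- the canonical map from the amalgamated sum -/
  θ : Amalg u₁ u₂ →+ R
  /-- `θ : Amalg u₁ u₂ → R` is the universal map to a cancellative saturated monoid,
  i.e. `R` is the saturation of the integralization of the amalgamated sum -/
  satint_universal : ∀ (T : Type) [AddCommMonoid T] [IsCancelAdd T],
    IsSaturatedAddMonoid T → ∀ f : Amalg u₁ u₂ →+ T, ∃! g : R →+ T, g.comp θ = f
  /-- the square commutes -/
  comm : (θ.comp (amalgInl u₁ u₂)).comp u₁ = (θ.comp (amalgInr u₁ u₂)).comp u₂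
  /-- `R` satisfies the universal property of the pushout in the category of fs monoids -/
  pushout_universal : ∀ (T : Type) [AddCommMonoid T] [IsCancelAdd T],
    AddMonoid.FG T → IsSaturatedAddMonoid T →
    ∀ (t₁ : P₁ →+ T) (t₂ : P₂ →+ T), t₁.comp u₁ = t₂.comp u₂ →
      ∃! g : R →+ T,
        g.comp (θ.comp (amalgInl u₁ u₂)) = t₁ ∧ g.comp (θ.comp (amalgInr u₁ u₂)) = t₂

end Amalg


section GG

variable (M : Type) [AddCommMonoid M]

/-- The setoid on `M × M` defining the Grothendieck group. -/
def ggSetoid : Setoid (M × M) where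
  r x y := ∃ k, x.1 + y.2 + k = y.1 + x.2 + k
  iseqv := by
    refine ⟨fun x => ⟨0, rfl⟩, fun {x y} ⟨k, h⟩ => ⟨k, h.symm⟩, ?_⟩
    rintro x y z ⟨k, h1⟩ ⟨l, h2⟩
    refine ⟨k + l + (y.1 + y.2), ?_⟩
    calc x.1 + z.2 + (k + l + (y.1 + y.2)) = (x.1 + y.2 + k) + (y.1 + z.2 + l) := by abel
    _ = (y.1 + x.2 + k) + (z.1 + y.2 + l) := by rw [h1, h2]
    _ = z.1 + x.2 + (k + l + (y.1 + y.2)) := by abel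

/-- The Grothendieck group of a commutative monoid. -/
def GG : Type := Quotient (ggSetoid M)

variable {M}

def GG.mk (x : M × M) : GG M := Quotient.mk (ggSetoid M) x

lemma GG.sound {x y : M × M} (h : ∃ k, x.1 + y.2 + k = y.1 + x.2 + k) :
    GG.mk x = GG.mk y := Quot.sound h

lemma GG.mk_eq_mk {x y : M × M} : GG.mk x = GG.mk y ↔ ∃ k, x.1 + y.2 + k = y.1 + x.2 + k :=
  ⟨Quotient.exact, GG.sound⟩

instance : Add (GG M) :=
  ⟨Quotient.map₂ (· + ·) (by
    rintro x x' ⟨k, hk⟩ y y' ⟨l, hl⟩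
    refine ⟨k + l, ?_⟩
    show x.1 + y.1 + (x'.2 + y'.2) + (k + l) = x'.1 + y'.1 + (x.2 + y.2) + (k + l)
    calc x.1 + y.1 + (x'.2 + y'.2) + (k + l) = (x.1 + x'.2 + k) + (y.1 + y'.2 + l) := by abel
    _ = (x'.1 + x.2 + k) + (y'.1 + y.2 + l) := by rw [hk, hl]
    _ = x'.1 + y'.1 + (x.2 + y.2) + (k + l) := by abel)⟩

instance : Neg (GG M) :=
  ⟨Quotient.map Prod.swap (by
    rintro x y ⟨k, hk⟩
    refine ⟨k, ?_⟩
    show x.2 + y.1 + k = y.2 + x.1 + k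
    calc x.2 + y.1 + k = y.1 + x.2 + k := by abel
    _ = x.1 + y.2 + k := hk.symm
    _ = y.2 + x.1 + k := by abel)⟩

instance : Zero (GG M) := ⟨GG.mk (0, 0)⟩

lemma GG.mk_add (x y : M × M) : GG.mk x + GG.mk y = GG.mk (x + y) := rfl
lemma GG.neg_mk (x : M × M) : -GG.mk x = GG.mk x.swap := rfl
lemma GG.zero_def : (0 : GG M) = GG.mk (0, 0) := rfl

@[elab_as_elim]
lemma GG.ind {p : GG M → Prop} (h : ∀ x : M × M, p (GG.mk x)) : ∀ x, p x :=
  Quotient.ind h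

instance : AddCommGroup (GG M) where
  add_assoc := by
    refine GG.ind fun x => GG.ind fun y => GG.ind fun z => ?_
    simp only [GG.mk_add]
    exact GG.sound ⟨0, by simp [add_assoc]⟩
  zero_add := by
    refine GG.ind fun x => ?_
    rw [GG.zero_def, GG.mk_add]
    exact GG.sound ⟨0, by simp⟩
  add_zero := by
    refine GG.ind fun x => ?_
    rw [GG.zero_def, GG.mk_add]
    exact GG.sound ⟨0, by simp⟩
  add_comm := by
    refine GG.ind fun x => GG.ind fun y => ?_
    simp only [GG.mk_add]
    exact GG.sound ⟨0, by simp [add_comm]⟩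
  nsmul := nsmulRec
  zsmul := zsmulRec
  neg_add_cancel := by
    refine GG.ind fun x => ?_
    rw [GG.neg_mk, GG.mk_add, GG.zero_def]
    exact GG.sound ⟨0, by simp [add_comm]⟩

variable (M) in
/-- The canonical map to the Grothendieck group. -/
def toGG : M →+ GG M where
  toFun m := GG.mk (m, 0)
  map_zero' := rfl
  map_add' a b := (GG.sound ⟨0, by simp⟩).symm

lemma toGG_apply (m : M) : toGG M m = GG.mk (m, 0) := rfl

lemma toGG_eq_iff {a b : M} : toGG M a = toGG M b ↔ ∃ k, a + k = b + k := by
  simp only [toGG_apply, GG.mk_eq_mk]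
  simp

lemma GG.exists_add_eq (x : GG M) : ∃ a b : M, x + toGG M b = toGG M a := by
  induction x using GG.ind with
  | h y =>
    refine ⟨y.1, y.2, ?_⟩
    rw [toGG_apply, toGG_apply, GG.mk_add, GG.mk_eq_mk]
    exact ⟨0, by simp [add_comm]⟩

/-- Lift a monoid hom into a group to the Grothendieck group. -/
def GG.lift {A : Type*} [AddCommGroup A] (f : M →+ A) : GG M →+ A where
  toFun := Quotient.lift (fun x : M × M => f x.1 - f x.2) (by
    rintro x y ⟨k, hk⟩
    have := congrArg f hk
    simp only [map_add] at this
    rw [sub_eq_sub_iff_add_eq_add]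
    exact add_right_cancel this)
  map_zero' := by
    show f 0 - f 0 = 0
    simp
  map_add' := by
    refine GG.ind fun x => GG.ind fun y => ?_
    show f (x.1 + y.1) - f (x.2 + y.2) = (f x.1 - f x.2) + (f y.1 - f y.2)
    simp only [map_add]
    abel

lemma GG.lift_toGG {A : Type*} [AddCommGroup A] (f : M →+ A) (m : M) :
    GG.lift f (toGG M m) = f m := by
  show f m - f 0 = f m
  simp

lemma toGG_injective (T : Type) [AddCommMonoid T] [IsCancelAdd T] :
    Function.Injective (toGG T) := by
  intro a b h
  obtain ⟨k, hk⟩ := toGG_eq_iff.mp h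
  exact add_right_cancel hk

end GG

section Sat

variable {G : Type} [AddCommGroup G]

/-- The saturation of a submonoid `N` of a group `G`. -/
def satSub (N : AddSubmonoid G) : AddSubmonoid G where
  carrier := {x | ∃ n : ℕ, 1 ≤ n ∧ n • x ∈ N}
  zero_mem' := ⟨1, le_refl 1, by simpa using N.zero_mem⟩
  add_mem' := by
    rintro x y ⟨n, hn, hx⟩ ⟨m, hm, hy⟩
    refine ⟨n * m, Nat.one_le_iff_ne_zero.mpr (by positivity), ?_⟩
    have : (n * m) • (x + y) = m • (n • x) + n • (m • y) := by
      rw [smul_add, ← mul_smul m n x, ← mul_smul n m y, mul_comm m n]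
    rw [this]
    exact N.add_mem (AddSubmonoid.nsmul_mem _ hx m) (AddSubmonoid.nsmul_mem _ hy n)

lemma mem_satSub {N : AddSubmonoid G} {x : G} :
    x ∈ satSub N ↔ ∃ n : ℕ, 1 ≤ n ∧ n • x ∈ N := Iff.rfl

lemma le_satSub (N : AddSubmonoid G) : N ≤ satSub N :=
  fun x hx => ⟨1, le_refl 1, by simpa using hx⟩

theorem gordan_free (G : Type) [AddCommGroup G] [Module ℤ G] [Module.Free ℤ G]
    [Module.Finite ℤ G] (N : AddSubmonoid G) (hN : N.FG) : (satSub N).FG := by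
  classical
  obtain ⟨s, hs⟩ := hN
  let b := Module.Free.chooseBasis ℤ G
  set ι := Module.Free.ChooseBasisIndex ℤ G
  -- the bound
  set B : ι → ℤ := fun i => ∑ a ∈ s, |b.repr a i| with hB
  -- the finite "box" of small elements of the saturation
  set K : Set G := {y | y ∈ satSub N ∧ ∀ i, |b.repr y i| ≤ B i} with hK
  have hKfin : K.Finite := by
    have hsub : K ⊆ (fun y (i : ι) => b.repr y i) ⁻¹'
        (Set.univ.pi fun i => Set.Icc (-(B i)) (B i)) := by
      rintro y ⟨-, hy⟩ i -
      exact abs_le.mp (hy i)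
    refine Set.Finite.subset (Set.Finite.preimage ?_ ?_) hsub
    · intro y₁ _ y₂ _ h
      apply b.repr.injective
      ext i
      exact congrFun h i
    · exact Set.Finite.pi fun i => Set.finite_Icc _ _
  have hsR : ↑s ⊆ (satSub N : Set G) := fun a ha =>
    le_satSub N (hs ▸ AddSubmonoid.subset_closure ha)
  refine (AddSubmonoid.fg_iff _).mpr ⟨↑s ∪ K, le_antisymm ?_ ?_, s.finite_toSet.union hKfin⟩
  · rw [AddSubmonoid.closure_le]
    exact Set.union_subset hsR (fun y hy => hy.1)
  · rintro x ⟨n, hn, hx⟩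
    rw [← hs] at hx
    obtain ⟨l, hl, hsum⟩ := AddSubmonoid.exists_multiset_of_mem_closure hx
    -- rewrite the sum over the finset s
    have hsum' : n • x = ∑ a ∈ s, l.count a • a := by
      rw [← hsum]
      exact Finset.sum_multiset_count_of_subset l s
        (fun a ha => hl a (Multiset.mem_toFinset.mp ha))
    set z : G := ∑ a ∈ s, (l.count a / n) • a with hz
    have hzN : z ∈ N := by
      rw [← hs]
      exact AddSubmonoid.sum_mem _ fun a ha =>
        AddSubmonoid.nsmul_mem _ (AddSubmonoid.subset_closure ha) _
    have hny : n • (x - z) = ∑ a ∈ s, (l.count a % n) • a := by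
      rw [smul_sub, hsum', hz, Finset.smul_sum, ← Finset.sum_sub_distrib]
      refine Finset.sum_congr rfl fun a _ => ?_
      rw [← mul_smul, sub_eq_iff_eq_add', ← add_smul, Nat.div_add_mod]
    have hyR : x - z ∈ satSub N := by
      refine ⟨n, hn, ?_⟩
      rw [hny, ← hs]
      exact AddSubmonoid.sum_mem _ fun a ha =>
        AddSubmonoid.nsmul_mem _ (AddSubmonoid.subset_closure ha) _
    have hyK : x - z ∈ K := by
      refine ⟨hyR, fun i => ?_⟩
      have h1 : (n : ℤ) * b.repr (x - z) i = ∑ a ∈ s, ((l.count a % n : ℕ) : ℤ) * b.repr a i := by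
        have h2 := congrArg (fun g => b.repr g i) hny
        simpa [Finset.sum_apply', nsmul_eq_mul] using h2
      have hnpos : (0 : ℤ) < (n : ℤ) := by exact_mod_cast hn
      have h3 : (n : ℤ) * |b.repr (x - z) i| ≤ (n : ℤ) * B i := by
        calc (n : ℤ) * |b.repr (x - z) i| = |(n : ℤ) * b.repr (x - z) i| := by
              rw [abs_mul, abs_of_nonneg hnpos.le]
        _ = |∑ a ∈ s, ((l.count a % n : ℕ) : ℤ) * b.repr a i| := by rw [h1]
        _ ≤ ∑ a ∈ s, |((l.count a % n : ℕ) : ℤ) * b.repr a i| :=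
              Finset.abs_sum_le_sum_abs _ _
        _ ≤ ∑ a ∈ s, (n : ℤ) * |b.repr a i| := by
              refine Finset.sum_le_sum fun a _ => ?_
              rw [abs_mul, abs_of_nonneg (by positivity)]
              refine mul_le_mul_of_nonneg_right ?_ (abs_nonneg _)
              exact_mod_cast (Nat.mod_lt _ (by omega)).le
        _ = (n : ℤ) * B i := by rw [hB, Finset.mul_sum]
      exact le_of_mul_le_mul_left h3 hnpos
    have hmem : z + (x - z) ∈ AddSubmonoid.closure (↑s ∪ K) := by
      refine AddSubmonoid.add_mem _ ?_ ?_
      · refine AddSubmonoid.closure_mono Set.subset_union_left ?_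
        rwa [hs]
      · exact AddSubmonoid.subset_closure (Or.inr hyK)
    rwa [add_sub_cancel] at hmem

/-- Elements of `G` whose image in a quotient is in the saturation, with torsion kernel,
are in the saturation. -/
theorem gordan (G : Type) [AddCommGroup G] (hG : AddGroup.FG G) (N : AddSubmonoid G)
    (hN : N.FG) : (satSub N).FG := by
  classical
  haveI : Module.Finite ℤ G := Module.Finite.iff_addGroup_fg.mpr hG
  set T := Submodule.torsion ℤ G with hT
  set π : G →ₗ[ℤ] G ⧸ T := T.mkQ with hπ
  set N' : AddSubmonoid (G ⧸ T) := N.map π.toAddMonoidHom with hNdef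
  have hN' : N'.FG := hN.map _
  -- every torsion element is killed by a positive natural number
  have htors : ∀ v : G, v ∈ T → ∃ k : ℕ, 1 ≤ k ∧ k • v = 0 := by
    intro v hv
    obtain ⟨a, ha⟩ := (Submodule.mem_torsion_iff v).mp hv
    have hane : (a : ℤ) ≠ 0 := nonZeroDivisors.coe_ne_zero a
    refine ⟨(a : ℤ).natAbs, Nat.one_le_iff_ne_zero.mpr (Int.natAbs_ne_zero.mpr hane), ?_⟩
    have ha' : (a : ℤ) • v = 0 := ha
    have : ((a : ℤ).natAbs : ℤ) • v = 0 := by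
      rcases Int.natAbs_eq (a : ℤ) with h | h
      · rw [← h]; exact ha'
      · have h2 : ((a : ℤ).natAbs : ℤ) = -(a : ℤ) := by omega
        rw [h2, neg_smul, ha', neg_zero]
    rwa [natCast_zsmul] at this
  -- the key equivalence
  have key : ∀ x : G, x ∈ satSub N ↔ π x ∈ satSub N' := by
    intro x
    constructor
    · rintro ⟨n, hn, hx⟩
      exact ⟨n, hn, ⟨n • x, hx, by simp⟩⟩
    · rintro ⟨n, hn, hx⟩
      obtain ⟨m, hm, hmx⟩ := hx
      have hπeq : π m = π (n • x) := by
        rw [map_nsmul]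
        exact hmx
      have ht : m - n • x ∈ T := by
        have := (Submodule.Quotient.eq T).mp hπeq
        exact this
      obtain ⟨k, hk, hkv⟩ := htors _ ht
      refine ⟨k * n, Nat.one_le_iff_ne_zero.mpr (by positivity), ?_⟩
      have : (k * n) • x = k • m := by
        have := congrArg (fun w => w + k • (n • x)) hkv
        simp only [smul_sub, sub_add_cancel, zero_add] at this
        rw [mul_smul]
        exact this.symm
      rw [this]
      exact AddSubmonoid.nsmul_mem _ hm k
  -- torsion elements are in the saturation
  have hTsub : (T : Set G) ⊆ (satSub N : Set G) := by
    intro v hv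
    obtain ⟨k, hk, hkv⟩ := htors v hv
    exact ⟨k, hk, by rw [hkv]; exact N.zero_mem⟩
  -- T is finite
  haveI : Module.Finite ℤ T := Module.Finite.iff_fg.mpr (IsNoetherian.noetherian T)
  haveI : Finite ↥T := Module.finite_of_fg_torsion ↥T (Submodule.torsion_isTorsion)
  have hTfin : (T : Set G).Finite := Set.toFinite _
  -- the free quotient case
  obtain ⟨s', hs'⟩ := gordan_free (G ⧸ T) N' hN'
  have hπsurj : Function.Surjective π := Submodule.mkQ_surjective T
  set φ : G ⧸ T → G := Function.surjInv hπsurj with hφdef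
  have hφ : ∀ q, π (φ q) = q := Function.surjInv_eq hπsurj
  refine (AddSubmonoid.fg_iff _).mpr ⟨φ '' ↑s' ∪ ↑T, le_antisymm ?_ ?_,
    (s'.finite_toSet.image φ).union hTfin⟩
  · rw [AddSubmonoid.closure_le]
    refine Set.union_subset ?_ hTsub
    rintro - ⟨q, hq, rfl⟩
    rw [SetLike.mem_coe, key, hφ q, ← hs']
    exact AddSubmonoid.subset_closure hq
  · intro x hx
    have hπx : π x ∈ AddSubmonoid.closure (↑s' : Set (G ⧸ T)) := by
      rw [hs']
      exact (key x).mp hx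
    obtain ⟨l, hl, hsum⟩ := AddSubmonoid.exists_multiset_of_mem_closure hπx
    have hlift : π ((l.map φ).sum) = π x := by
      rw [map_multiset_sum, Multiset.map_map]
      have : l.map (π ∘ φ) = l := by
        rw [show π ∘ φ = id from funext hφ, Multiset.map_id]
      rw [this, hsum]
    have hdiff : x - (l.map φ).sum ∈ T := by
      have := (Submodule.Quotient.eq T).mp hlift.symm
      exact this
    have hx' : x = (l.map φ).sum + (x - (l.map φ).sum) := by abel
    rw [hx']
    refine AddSubmonoid.add_mem _ ?_ (AddSubmonoid.subset_closure (Or.inr hdiff))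
    refine AddSubmonoid.multiset_sum_mem _ _ fun y hy => ?_
    obtain ⟨q, hq, rfl⟩ := Multiset.mem_map.mp hy
    exact AddSubmonoid.subset_closure (Or.inl ⟨q, hl q hq, rfl⟩)

end Sat

section Helpers

/-- `sat_range`: for a cancellative saturated monoid `T`, the image of `T` in its
Grothendieck group is saturated. -/
lemma sat_range {T : Type} [AddCommMonoid T] [IsCancelAdd T] (hT : IsSaturatedAddMonoid T)
    {z : GG T} {n : ℕ} (hn : 1 ≤ n) {t : T} (h : n • z = toGG T t) :
    ∃ w : T, toGG T w = z := by
  obtain ⟨a, b, hab⟩ := GG.exists_add_eq z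
  have h2 : toGG T (t + n • b) = toGG T (n • a) := by
    have h3 := congrArg (n • ·) hab
    simp only [smul_add, h] at h3
    rw [map_add, map_nsmul, map_nsmul]
    exact h3
  have h4 : n • a = n • b + t := by
    have := toGG_injective T h2
    rw [← this]
    abel
  obtain ⟨d, hd⟩ := hT a b ⟨n, hn, t, h4⟩
  refine ⟨d, ?_⟩
  have h5 : toGG T d + toGG T b = z + toGG T b := by
    rw [hab, ← map_add, add_comm d b, ← hd]
  exact add_right_cancel h5

/-- A product of finitely generated additive monoids is finitely generated. -/
lemma addMonoidFGProd {A B : Type} [AddCommMonoid A] [AddCommMonoid B]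
    (hA : AddMonoid.FG A) (hB : AddMonoid.FG B) : AddMonoid.FG (A × B) := by
  classical
  obtain ⟨S₁, h₁⟩ := hA.fg_top
  obtain ⟨S₂, h₂⟩ := hB.fg_top
  refine ⟨⟨S₁.image (AddMonoidHom.inl A B) ∪ S₂.image (AddMonoidHom.inr A B), ?_⟩⟩
  rw [eq_top_iff]
  rintro ⟨a, b⟩ -
  set C := AddSubmonoid.closure
    (↑(S₁.image (AddMonoidHom.inl A B) ∪ S₂.image (AddMonoidHom.inr A B)) : Set (A × B)) with hC
  have hmem1 : ((a, 0) : A × B) ∈ C := by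
    have hle : (⊤ : AddSubmonoid A) ≤ C.comap (AddMonoidHom.inl A B) := by
      rw [← h₁, AddSubmonoid.closure_le]
      intro x hx
      exact AddSubmonoid.subset_closure (by
        simp only [Finset.coe_union, Set.mem_union, Finset.coe_image, Set.mem_image]
        exact Or.inl ⟨x, hx, rfl⟩)
    exact hle (AddSubmonoid.mem_top a)
  have hmem2 : ((0, b) : A × B) ∈ C := by
    have hle : (⊤ : AddSubmonoid B) ≤ C.comap (AddMonoidHom.inr A B) := by
      rw [← h₂, AddSubmonoid.closure_le]
      intro x hx
      exact AddSubmonoid.subset_closure (by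
        simp only [Finset.coe_union, Set.mem_union, Finset.coe_image, Set.mem_image]
        exact Or.inr ⟨x, hx, rfl⟩)
    exact hle (AddSubmonoid.mem_top b)
  have : ((a, b) : A × B) = (a, 0) + (0, b) := by simp
  rw [this]
  exact C.add_mem hmem1 hmem2

/-- The Grothendieck group of a finitely generated monoid is finitely generated. -/
lemma ggFG {M : Type} [AddCommMonoid M] (hM : AddMonoid.FG M) : AddGroup.FG (GG M) := by
  classical
  obtain ⟨S, hS⟩ := hM.fg_top
  refine ⟨⟨S.image (toGG M), ?_⟩⟩
  rw [eq_top_iff]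
  rintro x -
  set C := AddSubgroup.closure (↑(S.image (toGG M)) : Set (GG M)) with hC
  have hmono : ∀ m : M, toGG M m ∈ C := by
    intro m
    have hle : (⊤ : AddSubmonoid M) ≤ C.toAddSubmonoid.comap (toGG M) := by
      rw [← hS, AddSubmonoid.closure_le]
      intro y hy
      exact AddSubgroup.subset_closure (by
        simp only [Finset.coe_image, Set.mem_image]
        exact ⟨y, hy, rfl⟩)
    exact hle (AddSubmonoid.mem_top m)
  obtain ⟨a, b, hab⟩ := GG.exists_add_eq x
  have : x = toGG M a - toGG M b := eq_sub_of_add_eq hab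
  rw [this]
  exact AddSubgroup.sub_mem _ (hmono a) (hmono b)

end Helpers



/-- Let `u₁ : P₃ → P₁` and `u₂ : P₃ → P₂` be homomorphisms of fine
saturated monoids.  Then the pushout of `u₁` and `u₂` exists in the category of fs monoids,
and it is computed as the saturation of the integralization of the amalgamated sum
`P₁ ⊕_{P₃} P₂` taken in commutative monoids. -/
theorem fs_pushout_exists (P₁ P₂ P₃ : Type)
    [AddCancelCommMonoid P₁] [AddCancelCommMonoid P₂] [AddCancelCommMonoid P₃]
    (h₁fg : AddMonoid.FG P₁) (h₂fg : AddMonoid.FG P₂) (h₃fg : AddMonoid.FG P₃)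
    (h₁sat : IsSaturatedAddMonoid P₁) (h₂sat : IsSaturatedAddMonoid P₂)
    (h₃sat : IsSaturatedAddMonoid P₃)
    (u₁ : P₃ →+ P₁) (u₂ : P₃ →+ P₂) :
    Nonempty (FSPushoutData u₁ u₂) := by
  classical
  -- the amalgamated sum is finitely generated
  haveI hProd : AddMonoid.FG (P₁ × P₂) := addMonoidFGProd h₁fg h₂fg
  haveI hMfg : AddMonoid.FG (Amalg u₁ u₂) :=
    AddMonoid.fg_of_surjective (amalgCon u₁ u₂).mk' AddCon.mk'_surjective
  -- notation
  set G := GG (Amalg u₁ u₂) with hGdef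
  set N : AddSubmonoid G := AddMonoidHom.mrange (toGG (Amalg u₁ u₂)) with hNdef
  have hNfg : N.FG := (AddMonoid.fg_iff_addSubmonoid_fg _).mp (AddMonoid.fg_range _)
  have hGfg : AddGroup.FG G := ggFG hMfg
  -- the canonical map θ
  set θ : Amalg u₁ u₂ →+ ↥(satSub N) :=
    (toGG (Amalg u₁ u₂)).codRestrict (satSub N) (fun m => le_satSub N ⟨m, rfl⟩) with hθdef
  have hθcoe : ∀ m, ((θ m : ↥(satSub N)) : G) = toGG (Amalg u₁ u₂) m := fun m => rfl
  -- R is saturated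
  have hsat : IsSaturatedAddMonoid ↥(satSub N) := by
    rintro a b ⟨n, hn, c, habc⟩
    have h1 : n • (a : G) = n • (b : G) + (c : G) := by
      have h0 := congrArg Subtype.val habc
      push_cast at h0
      exact h0
    obtain ⟨m, hm, hc⟩ := c.2
    have hd : (a : G) - (b : G) ∈ satSub N := by
      refine ⟨m * n, Nat.one_le_iff_ne_zero.mpr (by positivity), ?_⟩
      have h2 : n • ((a : G) - (b : G)) = (c : G) := by
        rw [smul_sub, h1]; abel
      rw [mul_smul, h2]
      exact hc
    refine ⟨⟨(a : G) - (b : G), hd⟩, ?_⟩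
    apply Subtype.ext
    show (a : G) = (b : G) + ((a : G) - (b : G))
    abel
  -- the universal property of the saturation of the integralization
  have SU : ∀ (T : Type) [AddCommMonoid T] [IsCancelAdd T],
      IsSaturatedAddMonoid T → ∀ f : Amalg u₁ u₂ →+ T,
      ∃! g : ↥(satSub N) →+ T, g.comp θ = f := by
    intro T _ _ hT f
    set F : G →+ GG T := GG.lift ((toGG T).comp f) with hFdef
    have hF : ∀ m, F (toGG (Amalg u₁ u₂) m) = toGG T (f m) := fun m => GG.lift_toGG _ m
    have hinj := toGG_injective T
    have hrange : ∀ x : ↥(satSub N), ∃ t : T, toGG T t = F ↑x := by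
      rintro ⟨x, n, hn, hx⟩
      obtain ⟨m, hm⟩ := hx
      show ∃ t : T, toGG T t = F x
      have h2 : n • F x = toGG T (f m) := by
        rw [← hF m, hm, map_nsmul]
      obtain ⟨w, hw⟩ := sat_range hT hn h2
      exact ⟨w, hw⟩
    choose gf hgf using hrange
    set g : ↥(satSub N) →+ T := {
      toFun := gf
      map_zero' := hinj (by rw [hgf]; simp)
      map_add' := fun x y => hinj (by
        rw [map_add, hgf, hgf, hgf, AddSubmonoid.coe_add, map_add]) } with hgdef
    have hcomp : g.comp θ = f := by
      ext m
      refine hinj ?_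
      show toGG T (gf (θ m)) = toGG T (f m)
      rw [hgf, hθcoe, hF]
    refine ⟨g, hcomp, ?_⟩
    intro g' hg'
    ext x
    obtain ⟨a, b, hab⟩ := GG.exists_add_eq (↑x : G)
    have hab' : x + θ b = θ a := Subtype.ext (by rw [AddSubmonoid.coe_add, hθcoe, hθcoe]; exact hab)
    have key : ∀ (h : ↥(satSub N) →+ T), h.comp θ = f → h x + f b = f a := by
      intro h hh
      rw [← DFunLike.congr_fun hh b, ← DFunLike.congr_fun hh a]
      show h x + h (θ b) = h (θ a)
      rw [← map_add, hab']
    exact add_right_cancel ((key g' hg').trans (key g hcomp).symm)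
  -- the commuting square
  have hkeyrel : ∀ p : P₃, amalgInl u₁ u₂ (u₁ p) = amalgInr u₁ u₂ (u₂ p) := by
    intro p
    exact ((amalgCon u₁ u₂).eq).mpr (AddConGen.Rel.of _ _ ⟨p, rfl, rfl⟩)
  refine ⟨{
    R := ↥(satSub N)
    instAddCommMonoid := inferInstance
    instCancel := {
      add_left_cancel := fun a b c h => Subtype.ext
        (add_left_cancel (a := (a : G)) (congrArg Subtype.val h))
      add_right_cancel := fun a b c h => Subtype.ext
        (add_right_cancel (b := (a : G)) (congrArg Subtype.val h)) }
    fg := (AddMonoid.fg_iff_addSubmonoid_fg _).mpr (gordan G hGfg N hNfg)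
    saturated := hsat
    θ := θ
    satint_universal := SU
    comm := ?_
    pushout_universal := ?_ }⟩
  · ext p
    exact congrArg (fun x => ((θ x : ↥(satSub N)) : G)) (hkeyrel p)
  · intro T _ _ hTfg hTsat t₁ t₂ hco
    set f₀ : P₁ × P₂ →+ T := t₁.coprod t₂ with hf₀
    have hker : amalgCon u₁ u₂ ≤ AddCon.ker f₀ := by
      refine AddCon.addConGen_le.mpr ?_
      rintro x y ⟨p, rfl, rfl⟩
      show f₀ (u₁ p, 0) = f₀ (0, u₂ p)
      rw [AddMonoidHom.coprod_apply, AddMonoidHom.coprod_apply]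
      simpa using DFunLike.congr_fun hco p
    set f : Amalg u₁ u₂ →+ T := (amalgCon u₁ u₂).lift f₀ hker with hfdef
    obtain ⟨g, hg, hguniq⟩ := SU T hTsat f
    have hfl : f.comp (amalgInl u₁ u₂) = t₁ := by
      ext a
      show (amalgCon u₁ u₂).lift f₀ hker ((amalgCon u₁ u₂).mk' (a, 0)) = t₁ a
      rw [AddCon.lift_mk']
      show t₁ a + t₂ 0 = t₁ a
      simp
    have hfr : f.comp (amalgInr u₁ u₂) = t₂ := by
      ext b
      show (amalgCon u₁ u₂).lift f₀ hker ((amalgCon u₁ u₂).mk' (0, b)) = t₂ b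
      rw [AddCon.lift_mk']
      show t₁ 0 + t₂ b = t₂ b
      simp
    refine ⟨g, ⟨?_, ?_⟩, ?_⟩
    · rw [← AddMonoidHom.comp_assoc, hg, hfl]
    · rw [← AddMonoidHom.comp_assoc, hg, hfr]
    · rintro g' ⟨hg1, hg2⟩
      refine hguniq g' ?_
      ext m
      obtain ⟨⟨a, b⟩, rfl⟩ := AddCon.mk'_surjective (c := amalgCon u₁ u₂) m
      have hdecomp : (amalgCon u₁ u₂).mk' (a, b) = amalgInl u₁ u₂ a + amalgInr u₁ u₂ b := by
        show (amalgCon u₁ u₂).mk' (a, b) = (amalgCon u₁ u₂).mk' (a, 0) + (amalgCon u₁ u₂).mk' (0, b)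
        rw [← map_add]
        congr 1
        simp
      show g' (θ ((amalgCon u₁ u₂).mk' (a, b))) = f ((amalgCon u₁ u₂).mk' (a, b))
      rw [hdecomp]
      simp only [map_add]
      have e1 : g' (θ (amalgInl u₁ u₂ a)) = t₁ a := DFunLike.congr_fun hg1 a
      have e2 : g' (θ (amalgInr u₁ u₂ b)) = t₂ b := DFunLike.congr_fun hg2 b
      have e3 : f (amalgInl u₁ u₂ a) = t₁ a := DFunLike.congr_fun hfl a
      have e4 : f (amalgInr u₁ u₂ b) = t₂ b := DFunLike.congr_fun hfr b
      rw [e1, e2, e3, e4]
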